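/- arXiv:0806.4973 — 4 statements merged into one kernel-verified Lean document; each statement's English description precedes it below -/
import Mathlib

section
/- Let A be a complex Banach algebra and let μ ∈ A*. Define R_μ, L_μ : A → A* by (R_μ a)(b) = μ(ba) and (L_μ a)(b) = μ(ab). Then R_μ is a compact operator if and only if L_μ is a compact operator. -/
open Metric Set

/-- Key half: if `L a b = R b a` for all `a b`, and `R` maps the closed unit ball into a
relatively compact set, then so does `L`. This is a specialized Schauder-type argument. -/
lemma wap_key_half {A : Type*} [NormedRing A] [NormedAlgebra ℂ A]
    (L R : A →L[ℂ] StrongDual ℂ A)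
    (h : ∀ a b : A, L a b = R b a)
    (hRc : IsCompact (closure (R '' Metric.closedBall 0 1))) :
    IsCompact (closure (L '' Metric.closedBall 0 1)) := by
  have htb : TotallyBounded (L '' Metric.closedBall 0 1) := by
    rw [Metric.totallyBounded_iff]
    intro ε hε
    have hRtb : TotallyBounded (R '' Metric.closedBall 0 1) :=
      hRc.totallyBounded.subset subset_closure
    obtain ⟨t, htf, htc⟩ := (Metric.totallyBounded_iff).mp hRtb (ε/4) (by linarith)
    -- bound on the norms of the net points
    obtain ⟨C, hC⟩ := (htf.image norm).bddAbove
    have hC' : ∀ y ∈ t, ‖y‖ ≤ C := fun y hy => hC (mem_image_of_mem _ hy)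
    haveI : Fintype ↥t := htf.fintype
    -- evaluation map into a finite-dimensional space
    set G : A → (↥t → ℂ) := fun a y => (y : StrongDual ℂ A) a with hG
    have hGtb : TotallyBounded (G '' Metric.closedBall 0 1) := by
      have hsub : G '' Metric.closedBall 0 1 ⊆ Metric.closedBall 0 (max C 0) := by
        rintro _ ⟨a, ha, rfl⟩
        rw [Metric.mem_closedBall, dist_zero_right]
        refine pi_norm_le_iff_of_nonneg (le_max_right _ _) |>.2 fun y => ?_
        calc ‖(y : StrongDual ℂ A) a‖ ≤ ‖(y : StrongDual ℂ A)‖ * ‖a‖ :=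
              (y : StrongDual ℂ A).le_opNorm a
          _ ≤ C * 1 := by
              have := hC' y y.2
              have ha' : ‖a‖ ≤ 1 := by
                rwa [Metric.mem_closedBall, dist_zero_right] at ha
              exact mul_le_mul this ha' (norm_nonneg _) (le_trans (norm_nonneg _) this)
          _ ≤ max C 0 := by simp [le_max_left]
      exact (isCompact_closedBall _ _).totallyBounded.subset hsub
    -- a net with centers inside the image
    obtain ⟨u, hu_sub, hu_fin, hu_cov⟩ := totallyBounded_iff_subset.mp hGtb
      _ (dist_mem_uniformity (show (0:ℝ) < ε/4 by linarith))
    -- choose preimages of the net points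
    have hchoice : ∀ p : ↥t → ℂ, ∃ a : A, p ∈ u → a ∈ Metric.closedBall (0:A) 1 ∧ G a = p := by
      intro p
      by_cases hp : p ∈ u
      · obtain ⟨a, ha, hGa⟩ := hu_sub hp
        exact ⟨a, fun _ => ⟨ha, hGa⟩⟩
      · exact ⟨0, fun hc => absurd hc hp⟩
    choose g hg using hchoice
    refine ⟨L '' (g '' u), (hu_fin.image g).image L, ?_⟩
    rintro _ ⟨a, ha, rfl⟩
    have ha1 : ‖a‖ ≤ 1 := by rwa [Metric.mem_closedBall, dist_zero_right] at ha
    obtain ⟨p, hp, hdp⟩ := mem_iUnion₂.mp (hu_cov (mem_image_of_mem G ha))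
    have hdp' : dist (G a) p < ε/4 := hdp
    obtain ⟨hga, hGga⟩ := hg p hp
    have hga1 : ‖g p‖ ≤ 1 := by rwa [Metric.mem_closedBall, dist_zero_right] at hga
    refine mem_iUnion₂.mpr ⟨L (g p), mem_image_of_mem L (mem_image_of_mem g hp), ?_⟩
    rw [mem_ball, dist_eq_norm]
    have key : ‖L a - L (g p)‖ ≤ 3 * (ε/4) := by
      have h0 : (0:ℝ) ≤ 3 * (ε/4) := by linarith
      have hball : ∀ b : A, ‖b‖ ≤ 1 → ‖(L a - L (g p)) b‖ ≤ 3 * (ε/4) := ?_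
      · refine ContinuousLinearMap.opNorm_le_bound _ h0 (fun b => ?_)
        rcases eq_or_ne b 0 with rfl | hb0
        · simp
        · have hnb : (0:ℝ) < ‖b‖ := norm_pos_iff.mpr hb0
          have hb' : ‖((‖b‖ : ℂ)⁻¹ • b)‖ ≤ 1 := by
            rw [norm_smul, norm_inv, Complex.norm_real, Real.norm_eq_abs,
              abs_of_pos hnb, inv_mul_cancel₀ hnb.ne']
          have h2 := hball _ hb'
          rw [map_smul, norm_smul, norm_inv, Complex.norm_real, Real.norm_eq_abs,
            abs_of_pos hnb] at h2
          calc ‖(L a - L (g p)) b‖ = ‖b‖ * (‖b‖⁻¹ * ‖(L a - L (g p)) b‖) := by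
                field_simp
            _ ≤ ‖b‖ * (3 * (ε/4)) := mul_le_mul_of_nonneg_left h2 (norm_nonneg b)
            _ = 3 * (ε/4) * ‖b‖ := by ring
      intro b hb1
      -- find a net point close to R b
      have hRb : R b ∈ R '' Metric.closedBall 0 1 := by
        refine mem_image_of_mem R ?_
        rwa [Metric.mem_closedBall, dist_zero_right]
      obtain ⟨y, hy, hdy⟩ := mem_iUnion₂.mp (htc hRb)
      have hdy' : ‖R b - y‖ < ε/4 := by rwa [mem_ball, dist_eq_norm] at hdy
      have hcoord : dist (G a ⟨y, hy⟩) (p ⟨y, hy⟩) < ε/4 :=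
        dist_pi_lt_iff (by linarith) |>.mp hdp' ⟨y, hy⟩
      have hcoord' : ‖y a - y (g p)‖ < ε/4 := by
        have h1 : y (g p) = p ⟨y, hy⟩ := congrFun hGga ⟨y, hy⟩
        rw [← dist_eq_norm, h1]
        exact hcoord
      have e1 : ‖R b a - y a‖ ≤ ε/4 := by
        calc ‖R b a - y a‖ = ‖(R b - y) a‖ := by simp
          _ ≤ ‖R b - y‖ * ‖a‖ := (R b - y).le_opNorm a
          _ ≤ ε/4 * 1 := mul_le_mul hdy'.le ha1 (norm_nonneg _) (by linarith)
          _ = ε/4 := mul_one _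
      have e2 : ‖R b (g p) - y (g p)‖ ≤ ε/4 := by
        calc ‖R b (g p) - y (g p)‖ = ‖(R b - y) (g p)‖ := by simp
          _ ≤ ‖R b - y‖ * ‖g p‖ := (R b - y).le_opNorm _
          _ ≤ ε/4 * 1 := mul_le_mul hdy'.le hga1 (norm_nonneg _) (by linarith)
          _ = ε/4 := mul_one _
      have : ‖(L a - L (g p)) b‖ = ‖R b a - R b (g p)‖ := by
        simp [h a b, h (g p) b]
      rw [this]
      calc ‖R b a - R b (g p)‖
          = ‖(R b a - y a) + (y a - y (g p)) + (y (g p) - R b (g p))‖ := by ring_nf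
        _ ≤ ‖(R b a - y a) + (y a - y (g p))‖ + ‖y (g p) - R b (g p)‖ := norm_add_le _ _
        _ ≤ ‖R b a - y a‖ + ‖y a - y (g p)‖ + ‖y (g p) - R b (g p)‖ := by
            gcongr; exact norm_add_le _ _
        _ ≤ ε/4 + ε/4 + ε/4 := by
            refine add_le_add (add_le_add e1 hcoord'.le) ?_
            rw [norm_sub_rev]; exact e2
        _ = 3 * (ε/4) := by ring
    linarith [key]
  exact TotallyBounded.isCompact_of_isClosed htb.closure isClosed_closure

/-- For a complex Banach algebra `A` and `μ ∈ A*`, with `R_μ, L_μ : A → A*` given by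
`(R_μ a)(b) = μ(ba)` and `(L_μ a)(b) = μ(ab)`, the operator `R_μ` is compact (the image
of the closed unit ball is relatively norm-compact) if and only if `L_μ` is compact. -/
theorem wap_Rmu_compact_iff_Lmu_compact
    {A : Type*} [NormedRing A] [NormedAlgebra ℂ A] [CompleteSpace A]
    (μ : StrongDual ℂ A) (L R : A →L[ℂ] StrongDual ℂ A)
    (hL : ∀ a b : A, L a b = μ (a * b)) (hR : ∀ a b : A, R a b = μ (b * a)) :
    IsCompact (closure (R '' Metric.closedBall 0 1)) ↔
      IsCompact (closure (L '' Metric.closedBall 0 1)) := by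
  constructor
  · exact wap_key_half L R (fun a b => by rw [hL a b, hR b a])
  · exact wap_key_half R L (fun a b => by rw [hR a b, hL b a])
end

section
/- Let X be a measure space, E a complex Banach space, π : L¹(X) → B(E) a bounded linear map, and W a bounded linear operator on the Bochner space L²(X, E) such that for all f, g ∈ L²(X), all x ∈ E and all μ ∈ E*: ∫_X f(t) · μ((W(g•x))(t)) dt = μ(π(fg)(x)), where g•x ∈ L²(X, E) denotes the class of t ↦ g(t)x and fg ∈ L¹(X) is the pointwise product. Then the operator norm of π is at most the operator norm of W. -/
open MeasureTheory

/-- Let `X` be a measure space, `E` a complex Banach space, `π : L¹(X) → B(E)` bounded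
linear, and `W` a bounded operator on `L²(X, E)` with
`∫ f(t) φ((W(g•x))(t)) dt = φ(π(fg) x)` for all `f, g ∈ L²(X)`, `x ∈ E`, `φ ∈ E*`.
Then `‖π‖ ≤ ‖W‖`. -/
theorem norm_pi_le_norm_W
    {X : Type*} [MeasurableSpace X] (m : Measure X)
    {E : Type*} [NormedAddCommGroup E] [NormedSpace ℂ E] [CompleteSpace E]
    (π : Lp ℂ 1 m →L[ℂ] (E →L[ℂ] E))
    (W : Lp E 2 m →L[ℂ] Lp E 2 m)
    (hW : ∀ (f g : Lp ℂ 2 m) (x : E) (φ : StrongDual ℂ E)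
        (gx : Lp E 2 m) (fg : Lp ℂ 1 m),
      gx =ᵐ[m] (fun t => g t • x) → fg =ᵐ[m] (fun t => f t * g t) →
      ∫ t, f t * φ (W gx t) ∂m = φ (π fg x)) :
    ‖π‖ ≤ ‖W‖ := by
  refine π.opNorm_le_bound (norm_nonneg W) fun h => ?_
  refine (π h).opNorm_le_bound (by positivity) fun x => ?_
  refine NormedSpace.norm_le_dual_bound ℂ _ (by positivity) fun φ => ?_
  set H : X → ℂ := (h : X → ℂ) with hH
  set g : X → ℂ := fun t => ((Real.sqrt (‖H t‖) : ℝ) : ℂ) with hgdef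
  set f : X → ℂ := fun t =>
    if H t = 0 then 0 else H t / ((Real.sqrt (‖H t‖) : ℝ) : ℂ) with hfdef
  have aesmH : AEStronglyMeasurable H m := Lp.aestronglyMeasurable h
  have cg : Continuous fun z : ℂ => ((Real.sqrt (‖z‖) : ℝ) : ℂ) :=
    Complex.continuous_ofReal.comp (Real.continuous_sqrt.comp continuous_norm)
  have aesm_g : AEStronglyMeasurable g m := cg.comp_aestronglyMeasurable aesmH
  have aesm_f : AEStronglyMeasurable f m := by
    have mφ0 : Measurable fun z : ℂ =>
        if z = 0 then 0 else z / ((Real.sqrt (‖z‖) : ℝ) : ℂ) := by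
      refine Measurable.ite ?_ measurable_const (measurable_id.div cg.measurable)
      simp only [Set.setOf_eq_eq_singleton]; exact measurableSet_singleton (0 : ℂ)
    exact (mφ0.comp_aemeasurable aesmH.aemeasurable).aestronglyMeasurable
  -- pointwise facts
  have norm_g : ∀ t, ‖g t‖ = Real.sqrt (‖H t‖) := fun t => by
    simp [hgdef, Real.sqrt_nonneg, abs_of_nonneg]
  have sq_g : ∀ t, ‖g t‖ ^ 2 = ‖H t‖ := fun t => by
    rw [norm_g t, Real.sq_sqrt (norm_nonneg _)]
  have norm_f_le : ∀ t, ‖f t‖ ≤ ‖g t‖ := fun t => by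
    by_cases ht : H t = 0
    · simp [hfdef, ht, norm_g t, Real.sqrt_nonneg]
    · have : ‖f t‖ = ‖g t‖ := by
        simp only [hfdef, if_neg ht]
        rw [norm_div, norm_g t]
        exact Real.div_sqrt
      exact this.le
  have key : ∀ t, f t * g t = H t := fun t => by
    by_cases ht : H t = 0
    · simp [hfdef, ht]
    · have hpos : (0 : ℝ) < Real.sqrt (‖H t‖) :=
        Real.sqrt_pos.2 ((norm_pos_iff.mpr ht))
      have hne : ((Real.sqrt (‖H t‖) : ℝ) : ℂ) ≠ 0 := by
        exact_mod_cast hpos.ne'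
      simp only [hfdef, hgdef, if_neg ht]
      exact div_mul_cancel₀ _ hne
  -- memberships
  have mem_g : MemLp g 2 m := by
    rw [memLp_two_iff_integrable_sq_norm aesm_g]
    have : (fun t => ‖g t‖ ^ 2) = fun t => ‖H t‖ := funext sq_g
    rw [this]
    exact (L1.integrable_coeFn h).norm
  have mem_f : MemLp f 2 m := mem_g.of_le aesm_f (Filter.Eventually.of_forall norm_f_le)
  have mem_gx : MemLp (fun t => g t • x) 2 m :=
    MemLp.of_le_mul mem_g (aesm_g.smul_const x)
      (Filter.Eventually.of_forall fun t => by rw [norm_smul, mul_comm])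
  set fL : Lp ℂ 2 m := MemLp.toLp f mem_f with hfL
  set gL : Lp ℂ 2 m := MemLp.toLp g mem_g with hgL
  set gx : Lp E 2 m := MemLp.toLp _ mem_gx with hgx
  set ψ : X → ℂ := fun t => φ ((W gx : X → E) t) with hψdef
  have mem_ψ : MemLp ψ 2 m :=
    MemLp.of_le_mul (Lp.memLp (W gx))
      (φ.continuous.comp_aestronglyMeasurable (Lp.aestronglyMeasurable (W gx)))
      (Filter.Eventually.of_forall fun t => φ.le_opNorm _)
  set Ψ : Lp ℂ 2 m := MemLp.toLp ψ mem_ψ with hΨ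
  have mem_F : MemLp (fun t => star (f t)) 2 m :=
    mem_f.of_le (continuous_star.comp_aestronglyMeasurable aesm_f) (Filter.Eventually.of_forall fun t => (norm_star _).le)
  set F : Lp ℂ 2 m := MemLp.toLp _ mem_F with hF
  -- apply hypothesis
  have hint : ∫ t, (fL : X → ℂ) t * φ ((W gx : X → E) t) ∂m = φ (π h x) := by
    refine hW fL gL x φ gx h ?_ ?_
    · refine (mem_gx.coeFn_toLp).trans ?_
      filter_upwards [mem_g.coeFn_toLp] with t ht
      rw [ht]
    · filter_upwards [mem_f.coeFn_toLp, mem_g.coeFn_toLp] with t h1 h2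
      rw [h1, h2, key t]
  -- identify the integral with an inner product
  have hinner : (inner ℂ F Ψ : ℂ) = φ (π h x) := by
    rw [L2.inner_def, ← hint]
    refine integral_congr_ae ?_
    filter_upwards [mem_F.coeFn_toLp, mem_ψ.coeFn_toLp, mem_f.coeFn_toLp] with t h1 h2 h3
    rw [h1, h2, h3, RCLike.inner_apply]
    simp [hψdef, mul_comm]
  -- norm bounds
  have hFg : ‖F‖ ≤ ‖gL‖ := by
    rw [hF, hgL, Lp.norm_toLp, Lp.norm_toLp]
    refine ENNReal.toReal_mono mem_g.eLpNorm_ne_top (eLpNorm_mono_ae ?_)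
    exact Filter.Eventually.of_forall fun t => (norm_star _).le.trans (norm_f_le t)
  have hgxnorm : ‖gx‖ = ‖x‖ * ‖gL‖ := by
    rw [hgx, hgL, Lp.norm_toLp, Lp.norm_toLp]
    have : eLpNorm (fun t => g t • x) 2 m = eLpNorm (‖x‖ • g) 2 m := by
      refine eLpNorm_congr_norm_ae (Filter.Eventually.of_forall fun t => ?_)
      simp [norm_smul, mul_comm, abs_of_nonneg (norm_nonneg x)]
    rw [this, eLpNorm_const_smul, ENNReal.toReal_mul]
    simp
  have hΨnorm : ‖Ψ‖ ≤ ‖φ‖ * ‖W gx‖ := by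
    rw [hΨ, Lp.norm_toLp, Lp.norm_def]
    have h1 : eLpNorm ψ 2 m ≤ eLpNorm (‖φ‖ • (W gx : X → E)) 2 m := by
      refine eLpNorm_mono_ae (Filter.Eventually.of_forall fun t => ?_)
      rw [Pi.smul_apply, norm_smul, Real.norm_eq_abs, abs_of_nonneg (norm_nonneg φ)]
      exact φ.le_opNorm _
    have h2 : eLpNorm (‖φ‖ • (W gx : X → E)) 2 m = ‖φ‖₊ * eLpNorm (W gx : X → E) 2 m := by
      rw [eLpNorm_const_smul]; simp [enorm_eq_nnnorm]
    calc (eLpNorm ψ 2 m).toReal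
        ≤ ((‖φ‖₊ : ENNReal) * eLpNorm (W gx : X → E) 2 m).toReal := by
          refine ENNReal.toReal_mono ?_ (h1.trans_eq h2)
          exact ENNReal.mul_ne_top ENNReal.coe_ne_top (Lp.eLpNorm_ne_top _)
      _ = ‖φ‖ * (eLpNorm (W gx : X → E) 2 m).toReal := by
          rw [ENNReal.toReal_mul]; simp
  have hg2 : ‖gL‖ ^ 2 = ‖h‖ := by
    rw [← inner_self_eq_norm_sq (𝕜 := ℂ) gL, L2.inner_def]
    have : ∫ t, (inner ℂ ((gL : X → ℂ) t) ((gL : X → ℂ) t) : ℂ) ∂m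
        = ∫ t, ((‖H t‖ : ℝ) : ℂ) ∂m := by
      refine integral_congr_ae ?_
      filter_upwards [mem_g.coeFn_toLp] with t ht
      rw [ht, RCLike.inner_apply]
      simp only [hgdef, Complex.conj_ofReal, ← Complex.ofReal_mul]
      rw [Real.mul_self_sqrt (norm_nonneg (H t))]
    rw [this,
      show (∫ t, ((‖H t‖ : ℝ) : ℂ) ∂m) = ((∫ t, ‖H t‖ ∂m : ℝ) : ℂ) from integral_ofReal,
      L1.norm_eq_integral_norm h]
    simp; rfl
  -- final estimate
  calc ‖φ ((π h) x)‖ = ‖(inner ℂ F Ψ : ℂ)‖ := by rw [hinner]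
    _ ≤ ‖F‖ * ‖Ψ‖ := norm_inner_le_norm _ _
    _ ≤ ‖gL‖ * (‖φ‖ * (‖W‖ * (‖x‖ * ‖gL‖))) := by
        refine mul_le_mul hFg ?_ (norm_nonneg _) (norm_nonneg _)
        refine hΨnorm.trans ?_
        refine mul_le_mul_of_nonneg_left ?_ (norm_nonneg φ)
        refine (W.le_opNorm gx).trans ?_
        rw [hgxnorm]
    _ = (‖gL‖ ^ 2) * (‖W‖ * ‖x‖ * ‖φ‖) := by ring
    _ = ‖W‖ * ‖h‖ * ‖x‖ * ‖φ‖ := by rw [hg2]; ring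
end

section
/- Let X be a σ-finite measure space and E a complex Banach space. (i) For g ∈ L²(X) and H ∈ L²(X, E), the function (s, t) ↦ g(s)·H(t) defines an element g⊠H of L²(X×X, E) (with the product measure) satisfying ‖g⊠H‖ = ‖g‖·‖H‖. (ii) For every bounded linear operator W on L²(X, E), there exists a unique bounded linear operator W₂₃ on L²(X×X, E) such that W₂₃(g⊠H) = g⊠(W(H)) for all g ∈ L²(X) and H ∈ L²(X, E); moreover the operator norm of W₂₃ equals the operator norm of W. -/
open MeasureTheory
open scoped ENNReal symmDiff
set_option linter.unusedSectionVars false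

namespace Leg23

variable {X : Type*} [MeasurableSpace X] {m : Measure X} [SigmaFinite m]
  {E : Type*} [NormedAddCommGroup E] [NormedSpace ℂ E] [CompleteSpace E]

lemma aeeq_fst {γ : Type*} {f f' : X → γ} (h : f =ᵐ[m] f') :
    (fun q : X × X => f q.1) =ᵐ[m.prod m] (fun q => f' q.1) :=
  Measure.quasiMeasurePreserving_fst.ae_eq_comp h

lemma aeeq_snd {γ : Type*} {f f' : X → γ} (h : f =ᵐ[m] f') :
    (fun q : X × X => f q.2) =ᵐ[m.prod m] (fun q => f' q.2) :=
  Measure.quasiMeasurePreserving_snd.ae_eq_comp h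

lemma eLpNorm_two_sq {α : Type*} [MeasurableSpace α] {μ : Measure α} (f : α → E) :
    (eLpNorm f 2 μ) ^ (2 : ℕ) = ∫⁻ x, (‖f x‖₊ : ℝ≥0∞) ^ (2 : ℕ) ∂μ := by
  rw [eLpNorm_eq_lintegral_rpow_enorm_toReal two_ne_zero ENNReal.ofNat_ne_top]
  have h2 : ((2 : ℝ≥0∞).toReal) = (2 : ℝ) := by simp
  rw [h2]
  rw [← ENNReal.rpow_natCast _ 2, ← ENNReal.rpow_mul]
  norm_num
  simp only [enorm_eq_nnnorm]

lemma eLpNorm_tensor (g : Lp ℂ 2 m) (H : Lp E 2 m) :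
    eLpNorm (fun q : X × X => (g : X → ℂ) q.1 • (H : X → E) q.2) 2 (m.prod m)
      = eLpNorm (g : X → ℂ) 2 m * eLpNorm (H : X → E) 2 m := by
  have hmeas : AEStronglyMeasurable (fun q : X × X => (g : X → ℂ) q.1 • (H : X → E) q.2)
      (m.prod m) := ((Lp.aestronglyMeasurable g).comp_fst).smul ((Lp.aestronglyMeasurable H).comp_snd)
  have hsq : (eLpNorm (fun q : X × X => (g : X → ℂ) q.1 • (H : X → E) q.2) 2 (m.prod m)) ^ (2:ℕ)
      = ((eLpNorm (g : X → ℂ) 2 m) * (eLpNorm (H : X → E) 2 m)) ^ (2:ℕ) := by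
    rw [eLpNorm_two_sq, mul_pow, eLpNorm_two_sq, eLpNorm_two_sq]
    rw [← lintegral_prod_mul (f := fun x => (‖(g : X → ℂ) x‖₊ : ℝ≥0∞) ^ (2:ℕ))
      (g := fun x => (‖(H : X → E) x‖₊ : ℝ≥0∞) ^ (2:ℕ)) ((Lp.aestronglyMeasurable g).enorm.pow_const 2 :
        AEMeasurable (fun x => (‖(g : X → ℂ) x‖₊ : ℝ≥0∞) ^ (2:ℕ)) m)
      ((Lp.aestronglyMeasurable H).enorm.pow_const 2 :
        AEMeasurable (fun x => (‖(H : X → E) x‖₊ : ℝ≥0∞) ^ (2:ℕ)) m)]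
    refine lintegral_congr fun q => ?_
    rw [nnnorm_smul, ENNReal.coe_mul, mul_pow]
  have := congrArg (fun x : ℝ≥0∞ => x ^ ((2:ℝ)⁻¹)) hsq
  simp only [← ENNReal.rpow_natCast, ← ENNReal.rpow_mul] at this
  norm_num at this
  exact this

lemma memLp_tensor (g : Lp ℂ 2 m) (H : Lp E 2 m) :
    MemLp (fun q : X × X => (g : X → ℂ) q.1 • (H : X → E) q.2) 2 (m.prod m) := by
  refine ⟨((Lp.aestronglyMeasurable g).comp_fst).smul ((Lp.aestronglyMeasurable H).comp_snd), ?_⟩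
  rw [eLpNorm_tensor]
  exact ENNReal.mul_lt_top (Lp.eLpNorm_lt_top g) (Lp.eLpNorm_lt_top H)

/-- The tensor `g ⊠ H` as an element of `L²(X×X, E)`. -/
noncomputable def tLp (g : Lp ℂ 2 m) (H : Lp E 2 m) : Lp E 2 (m.prod m) :=
  (memLp_tensor g H).toLp _

lemma tLp_ae (g : Lp ℂ 2 m) (H : Lp E 2 m) :
    (tLp g H : X × X → E) =ᵐ[m.prod m] fun q => (g : X → ℂ) q.1 • (H : X → E) q.2 :=
  (memLp_tensor g H).coeFn_toLp

lemma norm_tLp (g : Lp ℂ 2 m) (H : Lp E 2 m) : ‖tLp g H‖ = ‖g‖ * ‖H‖ := by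
  rw [tLp, Lp.norm_toLp, eLpNorm_tensor, ENNReal.toReal_mul, Lp.norm_def, Lp.norm_def]


lemma tLp_add_left (g g' : Lp ℂ 2 m) (H : Lp E 2 m) :
    tLp (g + g') H = tLp g H + tLp g' H := by
  refine Lp.ext ?_
  have h1 := tLp_ae (g + g') H
  have h2 := Lp.coeFn_add (tLp g H) (tLp g' H)
  have h3 := tLp_ae g H
  have h4 := tLp_ae g' H
  have h5 := aeeq_fst (m := m) (Lp.coeFn_add g g')
  filter_upwards [h1, h2, h3, h4, h5] with q e1 e2 e3 e4 e5
  simp only [Pi.add_apply] at e2 e5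
  rw [e1, e2, e5, e3, e4]; exact add_smul _ _ _

lemma tLp_smul_left (c : ℂ) (g : Lp ℂ 2 m) (H : Lp E 2 m) :
    tLp (c • g) H = c • tLp g H := by
  refine Lp.ext ?_
  have h1 := tLp_ae (c • g) H
  have h2 := Lp.coeFn_smul c (tLp g H)
  have h3 := tLp_ae g H
  have h5 := aeeq_fst (m := m) (Lp.coeFn_smul c g)
  filter_upwards [h1, h2, h3, h5] with q e1 e2 e3 e5
  simp only [Pi.smul_apply] at e2 e5
  rw [e1, e2, e5, e3]; exact smul_assoc _ _ _

lemma tLp_add_right (g : Lp ℂ 2 m) (H H' : Lp E 2 m) :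
    tLp g (H + H') = tLp g H + tLp g H' := by
  refine Lp.ext ?_
  have h1 := tLp_ae g (H + H')
  have h2 := Lp.coeFn_add (tLp g H) (tLp g H')
  have h3 := tLp_ae g H
  have h4 := tLp_ae g H'
  have h5 := aeeq_snd (m := m) (Lp.coeFn_add H H')
  filter_upwards [h1, h2, h3, h4, h5] with q e1 e2 e3 e4 e5
  simp only [Pi.add_apply] at e2 e5
  rw [e1, e2, e5, e3, e4]; exact smul_add _ _ _

lemma tLp_smul_right (c : ℂ) (g : Lp ℂ 2 m) (H : Lp E 2 m) :
    tLp g (c • H) = c • tLp g H := by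
  refine Lp.ext ?_
  have h1 := tLp_ae g (c • H)
  have h2 := Lp.coeFn_smul c (tLp g H)
  have h3 := tLp_ae g H
  have h5 := aeeq_snd (m := m) (Lp.coeFn_smul c H)
  filter_upwards [h1, h2, h3, h5] with q e1 e2 e3 e5
  simp only [Pi.smul_apply] at e2 e5
  rw [e1, e2, e5, e3]; exact smul_comm _ _ _

variable (m E) in
/-- The tensor map as a bilinear map. -/
noncomputable def B : Lp ℂ 2 m →ₗ[ℂ] Lp E 2 m →ₗ[ℂ] Lp E 2 (m.prod m) :=
  LinearMap.mk₂ ℂ tLp tLp_add_left tLp_smul_left tLp_add_right tLp_smul_right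

variable (m E) in
/-- The lifted map on the algebraic tensor product. -/
noncomputable def Phi : (TensorProduct ℂ (Lp ℂ 2 m) (Lp E 2 m)) →ₗ[ℂ] Lp E 2 (m.prod m) :=
  TensorProduct.lift (B m E)

@[simp] lemma Phi_tmul (g : Lp ℂ 2 m) (H : Lp E 2 m) :
    Phi m E (g ⊗ₜ[ℂ] H) = tLp g H := rfl

lemma coeFn_sum_tLp {ι : Type*} (A : Finset ι) (g : ι → Lp ℂ 2 m) (H : ι → Lp E 2 m) :
    ((∑ i ∈ A, tLp (g i) (H i) : Lp E 2 (m.prod m)) : X × X → E) =ᵐ[m.prod m]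
      fun q => ∑ i ∈ A, (g i : X → ℂ) q.1 • (H i : X → E) q.2 := by
  classical
  induction A using Finset.induction with
  | empty => simp only [Finset.sum_empty]; exact Lp.coeFn_zero (E := E) (p := 2) (μ := m.prod m)
  | insert a A' hnm ih =>
    rw [Finset.sum_insert hnm]
    refine (Lp.coeFn_add _ _).trans ?_
    have h1 := tLp_ae (g a) (H a)
    filter_upwards [h1, ih] with q e1 e2
    simp only [Pi.add_apply, e1, e2]
    rw [Finset.sum_insert hnm]

lemma coeFn_sum_smul {ι : Type*} (A : Finset ι) (c : ι → ℂ) (H : ι → Lp E 2 m) :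
    ((∑ i ∈ A, c i • H i : Lp E 2 m) : X → E) =ᵐ[m]
      fun t => ∑ i ∈ A, c i • (H i : X → E) t := by
  classical
  induction A using Finset.induction with
  | empty => simp only [Finset.sum_empty]; exact Lp.coeFn_zero (E := E) (p := 2) (μ := m)
  | insert a A' hnm ih =>
    rw [Finset.sum_insert hnm]
    refine (Lp.coeFn_add _ _).trans ?_
    filter_upwards [Lp.coeFn_smul (c a) (H a), ih] with t e1 e2
    simp only [Pi.add_apply, e1, e2, Pi.smul_apply]
    rw [Finset.sum_insert hnm]

lemma nnnorm_Lp_sq (f : Lp E 2 m) :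
    ((‖f‖₊ : ℝ≥0∞)) ^ (2:ℕ) = ∫⁻ t, (‖(f : X → E) t‖₊ : ℝ≥0∞) ^ (2:ℕ) ∂m := by
  have : (‖f‖₊ : ℝ≥0∞) = eLpNorm (f : X → E) 2 m := by
    rw [Lp.nnnorm_def, ENNReal.coe_toNNReal (Lp.eLpNorm_ne_top f)]
  rw [this, eLpNorm_two_sq]

lemma nnnorm_Lp_sq' (f : Lp E 2 (m.prod m)) :
    ((‖f‖₊ : ℝ≥0∞)) ^ (2:ℕ) = ∫⁻ q, (‖(f : X × X → E) q‖₊ : ℝ≥0∞) ^ (2:ℕ) ∂(m.prod m) := by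
  have : (‖f‖₊ : ℝ≥0∞) = eLpNorm (f : X × X → E) 2 (m.prod m) := by
    rw [Lp.nnnorm_def, ENNReal.coe_toNNReal (Lp.eLpNorm_ne_top f)]
  rw [this, eLpNorm_two_sq]

lemma J_repr {ι : Type*} (A : Finset ι) (g : ι → Lp ℂ 2 m) (H : ι → Lp E 2 m) :
    ((‖∑ i ∈ A, tLp (g i) (H i)‖₊ : ℝ≥0∞)) ^ (2:ℕ)
      = ∫⁻ s, (‖(∑ i ∈ A, (g i : X → ℂ) s • H i : Lp E 2 m)‖₊ : ℝ≥0∞) ^ (2:ℕ) ∂m := by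
  rw [nnnorm_Lp_sq']
  have h := coeFn_sum_tLp A g H
  have hmeas : AEMeasurable
      (fun q : X × X => (‖∑ i ∈ A, (g i : X → ℂ) q.1 • (H i : X → E) q.2‖₊ : ℝ≥0∞) ^ (2:ℕ))
      (m.prod m) := by
    have : AEStronglyMeasurable
        (fun q : X × X => ∑ i ∈ A, (g i : X → ℂ) q.1 • (H i : X → E) q.2) (m.prod m) :=
      Finset.aestronglyMeasurable_fun_sum A fun i _ =>
        ((Lp.aestronglyMeasurable (g i)).comp_fst).smul ((Lp.aestronglyMeasurable (H i)).comp_snd)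
    exact this.enorm.pow_const 2
  rw [lintegral_congr_ae (h.mono fun q hq => by rw [hq]), lintegral_prod _ hmeas]
  refine lintegral_congr fun s => ?_
  rw [nnnorm_Lp_sq]
  exact (lintegral_congr_ae ((coeFn_sum_smul A (fun i => (g i : X → ℂ) s) H).mono
    fun t ht => by rw [ht])).symm

lemma key_estimate (W : Lp E 2 m →L[ℂ] Lp E 2 m) {ι : Type*} (A : Finset ι)
    (g : ι → Lp ℂ 2 m) (H : ι → Lp E 2 m) :
    ‖∑ i ∈ A, tLp (g i) (W (H i))‖ ≤ ‖W‖ * ‖∑ i ∈ A, tLp (g i) (H i)‖ := by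
  have h1 := J_repr A g (fun i => W (H i))
  have h2 := J_repr A g H
  have h3 : ∀ s : X, (∑ i ∈ A, (g i : X → ℂ) s • W (H i)) = W (∑ i ∈ A, (g i : X → ℂ) s • H i) := by
    intro s; rw [map_sum]; exact Finset.sum_congr rfl fun i _ => (W.map_smul _ _).symm
  have hle : ((‖∑ i ∈ A, tLp (g i) (W (H i))‖₊ : ℝ≥0∞)) ^ (2:ℕ)
      ≤ ((‖W‖₊ : ℝ≥0∞)) ^ (2:ℕ) * ((‖∑ i ∈ A, tLp (g i) (H i)‖₊ : ℝ≥0∞)) ^ (2:ℕ) := by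
    rw [h1, h2, ← lintegral_const_mul' _ _ (ENNReal.pow_ne_top ENNReal.coe_ne_top)]
    refine lintegral_mono fun s => ?_
    rw [h3 s, ← mul_pow, ← ENNReal.coe_mul]
    exact pow_le_pow_left' (ENNReal.coe_le_coe.mpr (W.le_opNNNorm _)) 2
  have hle' : (‖∑ i ∈ A, tLp (g i) (W (H i))‖₊) ^ 2
      ≤ (‖W‖₊ * ‖∑ i ∈ A, tLp (g i) (H i)‖₊) ^ 2 := by
    rw [mul_pow]; exact_mod_cast hle
  have hfin := pow_le_pow_iff_left₀ zero_le zero_le two_ne_zero |>.mp hle'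
  exact_mod_cast hfin

lemma indicatorConstLp_congr {α : Type*} [MeasurableSpace α] {μ : Measure α} {s t : Set α}
    (h : s = t) (hs : MeasurableSet s) (hμs : μ s ≠ ∞) (ht : MeasurableSet t) (hμt : μ t ≠ ∞)
    (c : E) : indicatorConstLp 2 hs hμs c = indicatorConstLp 2 ht hμt c := by
  subst h; rfl

/-- The window sets. -/
noncomputable def R (m : Measure X) [SigmaFinite m] (n : ℕ) : Set (X × X) :=
  spanningSets m n ×ˢ spanningSets m n

lemma R_meas (n : ℕ) : MeasurableSet (R m n) :=
  (measurableSet_spanningSets m n).prod (measurableSet_spanningSets m n)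

lemma R_fin (n : ℕ) : (m.prod m) (R m n) ≠ ∞ := by
  rw [R, Measure.prod_prod]
  exact (ENNReal.mul_lt_top (measure_spanningSets_lt_top m n)
    (measure_spanningSets_lt_top m n)).ne

lemma R_mono : Monotone (R m) := fun a b hab =>
  Set.prod_mono (monotone_spanningSets m hab) (monotone_spanningSets m hab)

lemma R_iUnion : (⋃ n, R m n) = Set.univ := by
  ext q
  simp only [Set.mem_iUnion, Set.mem_univ, iff_true, R, Set.mem_prod]
  have h1 : q.1 ∈ ⋃ n, spanningSets m n := by rw [iUnion_spanningSets]; trivial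
  have h2 : q.2 ∈ ⋃ n, spanningSets m n := by rw [iUnion_spanningSets]; trivial
  obtain ⟨i, hi⟩ := Set.mem_iUnion.mp h1
  obtain ⟨j, hj⟩ := Set.mem_iUnion.mp h2
  exact ⟨max i j, monotone_spanningSets m (le_max_left i j) hi,
    monotone_spanningSets m (le_max_right i j) hj⟩

/-- Indicators of finite-measure rectangles are (images of) elementary tensors. -/
lemma rect_mem_range {A B : Set X} (hA : MeasurableSet A) (hB : MeasurableSet B)
    (hAf : m A ≠ ∞) (hBf : m B ≠ ∞) (hf : (m.prod m) (A ×ˢ B) ≠ ∞) (c : E) :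
    indicatorConstLp 2 (hA.prod hB) hf c ∈ LinearMap.range (Phi m E) := by
  refine ⟨(indicatorConstLp 2 hA hAf (1 : ℂ)) ⊗ₜ[ℂ] (indicatorConstLp 2 hB hBf c), ?_⟩
  rw [Phi_tmul]
  refine Lp.ext ?_
  refine (tLp_ae _ _).trans ?_
  have h1 := aeeq_fst (m := m)
    (indicatorConstLp_coeFn (p := 2) (hs := hA) (hμs := hAf) (c := (1:ℂ)))
  have h2 := aeeq_snd (m := m)
    (indicatorConstLp_coeFn (p := 2) (hs := hB) (hμs := hBf) (c := c))
  have h3 := indicatorConstLp_coeFn (p := 2) (hs := hA.prod hB) (hμs := hf) (c := c)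
  filter_upwards [h1, h2, h3] with q e1 e2 e3
  rw [e1, e2, e3]
  by_cases hq1 : q.1 ∈ A <;> by_cases hq2 : q.2 ∈ B <;>
    simp [Set.indicator, hq1, hq2, Set.mem_prod]

variable (m E) in
/-- The topological closure of the range of `Phi`. -/
noncomputable def Cl : Submodule ℂ (Lp E 2 (m.prod m)) :=
  (LinearMap.range (Phi m E)).topologicalClosure

lemma R_ind_mem_Cl (n : ℕ) (c : E) : indicatorConstLp 2 (R_meas n) (R_fin n) c ∈ Cl m E := by
  have hSf : m (spanningSets m n) ≠ ∞ := (measure_spanningSets_lt_top m n).ne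
  exact Submodule.le_topologicalClosure _
    (rect_mem_range (measurableSet_spanningSets m n) (measurableSet_spanningSets m n)
      hSf hSf (R_fin n) c)

lemma windowed_mem_Cl {t : Set (X × X)} (ht : MeasurableSet t) :
    ∀ (n : ℕ) (c : E) (htn : MeasurableSet (t ∩ R m n))
      (hfn : (m.prod m) (t ∩ R m n) ≠ ∞),
      indicatorConstLp 2 htn hfn c ∈ Cl m E := by
  haveI : Fact ((1:ℝ≥0∞) ≤ 2) := ⟨one_le_two⟩
  refine MeasurableSpace.induction_on_inter
    (C := fun t _ => ∀ (n : ℕ) (c : E) (htn : MeasurableSet (t ∩ R m n))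
      (hfn : (m.prod m) (t ∩ R m n) ≠ ∞), indicatorConstLp 2 htn hfn c ∈ Cl m E)
    generateFrom_prod.symm isPiSystem_prod ?_ ?_ ?_ ?_ t ht
  · intro n c htn hfn
    rw [indicatorConstLp_congr (Set.empty_inter _) htn hfn MeasurableSet.empty (by simp) c,
      indicatorConstLp_empty]
    exact zero_mem _
  · intro t htmem n c htn hfn
    obtain ⟨A, hA, B, hB, rfl⟩ := htmem
    have hAB : A ×ˢ B ∩ R m n = (A ∩ spanningSets m n) ×ˢ (B ∩ spanningSets m n) :=
      Set.prod_inter_prod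
    have hA' : MeasurableSet (A ∩ spanningSets m n) := hA.inter (measurableSet_spanningSets m n)
    have hB' : MeasurableSet (B ∩ spanningSets m n) := hB.inter (measurableSet_spanningSets m n)
    have hAf : m (A ∩ spanningSets m n) ≠ ∞ :=
      ((measure_mono Set.inter_subset_right).trans_lt (measure_spanningSets_lt_top m n)).ne
    have hBf : m (B ∩ spanningSets m n) ≠ ∞ :=
      ((measure_mono Set.inter_subset_right).trans_lt (measure_spanningSets_lt_top m n)).ne
    have hf' : (m.prod m) ((A ∩ spanningSets m n) ×ˢ (B ∩ spanningSets m n)) ≠ ∞ := by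
      rw [← hAB]; exact hfn
    rw [indicatorConstLp_congr hAB htn hfn (hA'.prod hB') hf' c]
    exact Submodule.le_topologicalClosure _ (rect_mem_range hA' hB' hAf hBf hf' c)
  · intro t htm ih n c htn hfn
    have hsub : t ∩ R m n ⊆ R m n := Set.inter_subset_right
    have heq : tᶜ ∩ R m n = R m n \ (t ∩ R m n) := by
      ext q; simp only [Set.mem_inter_iff, Set.mem_compl_iff, Set.mem_diff]; tauto
    have h1 : MeasurableSet (t ∩ R m n) := htm.inter (R_meas n)
    have hf1 : (m.prod m) (t ∩ R m n) ≠ ∞ :=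
      ((measure_mono hsub).trans_lt (R_fin n).lt_top).ne
    have h2 : MeasurableSet (R m n \ (t ∩ R m n)) := (R_meas n).diff h1
    have hf2 : (m.prod m) (R m n \ (t ∩ R m n)) ≠ ∞ :=
      ((measure_mono Set.diff_subset).trans_lt (R_fin n).lt_top).ne
    have hdu := indicatorConstLp_disjoint_union (p := 2) (μ := m.prod m) h1 h2 hf1 hf2
      disjoint_sdiff_self_right c
    have hcup : t ∩ R m n ∪ R m n \ (t ∩ R m n) = R m n := Set.union_diff_cancel hsub
    rw [indicatorConstLp_congr hcup (h1.union h2) (measure_union_ne_top hf1 hf2)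
      (R_meas n) (R_fin n) c] at hdu
    have hsec : indicatorConstLp 2 h2 hf2 c ∈ Cl m E := by
      have : indicatorConstLp 2 h2 hf2 c
          = indicatorConstLp 2 (R_meas n) (R_fin n) c - indicatorConstLp 2 h1 hf1 c := by
        rw [hdu]; abel
      rw [this]
      exact sub_mem (R_ind_mem_Cl n c) (ih n c h1 hf1)
    rw [indicatorConstLp_congr heq htn hfn h2 hf2 c]
    exact hsec
  · intro f hdisj hfm ih n c htn hfn
    set s : Set (X × X) := (⋃ i, f i) ∩ R m n with hs_def
    set tk : ℕ → Set (X × X) := fun k => (⋃ i ∈ Finset.range k, f i) ∩ R m n with htk_def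
    have htkm : ∀ k, MeasurableSet (tk k) := fun k =>
      (MeasurableSet.biUnion (Finset.range k).countable_toSet fun i _ => hfm i).inter (R_meas n)
    have htkf : ∀ k, (m.prod m) (tk k) ≠ ∞ := fun k =>
      ((measure_mono Set.inter_subset_right).trans_lt (R_fin n).lt_top).ne
    have hmem : ∀ k, indicatorConstLp 2 (htkm k) (htkf k) c ∈ Cl m E := by
      intro k
      induction k with
      | zero =>
        rw [indicatorConstLp_congr (by simp [htk_def]) (htkm 0) (htkf 0)
          MeasurableSet.empty (by simp) c, indicatorConstLp_empty]
        exact zero_mem _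
      | succ k ihk =>
        have hfk : MeasurableSet (f k ∩ R m n) := (hfm k).inter (R_meas n)
        have hfkf : (m.prod m) (f k ∩ R m n) ≠ ∞ :=
          ((measure_mono Set.inter_subset_right).trans_lt (R_fin n).lt_top).ne
        have hdisj2 : Disjoint (tk k) (f k ∩ R m n) := by
          refine Set.disjoint_left.mpr fun q hq1 hq2 => ?_
          obtain ⟨hq1a, -⟩ := hq1
          simp only [Set.mem_iUnion, Finset.mem_range] at hq1a
          obtain ⟨i, hik, hqi⟩ := hq1a
          exact Set.disjoint_left.mp (hdisj (Nat.ne_of_lt hik)) hqi hq2.1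
        have hdu := indicatorConstLp_disjoint_union (p := 2) (μ := m.prod m) (htkm k) hfk
          (htkf k) hfkf hdisj2 c
        have hcup : tk k ∪ f k ∩ R m n = tk (k + 1) := by
          show _ = (⋃ i ∈ Finset.range (k+1), f i) ∩ R m n
          rw [Finset.range_add_one, Finset.set_biUnion_insert, Set.union_inter_distrib_right]
          exact Set.union_comm _ _
        rw [indicatorConstLp_congr hcup ((htkm k).union hfk)
          (measure_union_ne_top (htkf k) hfkf) (htkm (k+1)) (htkf (k+1)) c] at hdu
        rw [hdu]
        exact add_mem ihk (ih k n c hfk hfkf)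
    have hsum_ne : (∑' i, (m.prod m) (f i ∩ R m n)) ≠ ∞ := by
      have hd2 : Pairwise (Function.onFun Disjoint fun i => f i ∩ R m n) := fun i j hij =>
        (hdisj hij).mono Set.inter_subset_left Set.inter_subset_left
      rw [← measure_iUnion hd2 fun i => (hfm i).inter (R_meas n)]
      exact ((measure_mono (Set.iUnion_subset fun i => Set.inter_subset_right)).trans_lt
        (R_fin n).lt_top).ne
    have htail := ENNReal.tendsto_sum_nat_add (fun i => (m.prod m) (f i ∩ R m n)) hsum_ne
    have hbound : ∀ k, (m.prod m) (tk k ∆ s) ≤ ∑' i, (m.prod m) (f (i + k) ∩ R m n) := by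
      intro k
      have hsub2 : tk k ⊆ s := Set.inter_subset_inter_left _
        (Set.iUnion₂_subset fun i _ => Set.subset_iUnion f i)
      rw [symmDiff_of_le hsub2]
      refine (measure_mono ?_).trans (measure_iUnion_le _)
      rintro q ⟨⟨hq1, hq2⟩, hq3⟩
      obtain ⟨j, hqj⟩ := Set.mem_iUnion.mp hq1
      have hjk : k ≤ j := by
        by_contra hlt
        push_neg at hlt
        exact hq3 ⟨Set.mem_biUnion (Finset.mem_range.mpr hlt) hqj, hq2⟩
      exact Set.mem_iUnion.mpr ⟨j - k, by rw [Nat.sub_add_cancel hjk]; exact ⟨hqj, hq2⟩⟩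
    have hzero : Filter.Tendsto (fun k => (m.prod m) (tk k ∆ s)) Filter.atTop (nhds 0) :=
      tendsto_of_tendsto_of_tendsto_of_le_of_le tendsto_const_nhds htail
        (fun k => zero_le) hbound
    have htends := tendsto_indicatorConstLp_set (p := 2) (μ := m.prod m) (hs := htn) (hμs := hfn) (c := c)
      (ht := htkm) (hμt := htkf) (by norm_num) hzero
    have hclosed : IsClosed ((Cl m E : Set (Lp E 2 (m.prod m)))) := by
      rw [Cl]; exact Submodule.isClosed_topologicalClosure _
    exact hclosed.mem_of_tendsto htends (Filter.Eventually.of_forall hmem)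

lemma indicator_mem_Cl {s : Set (X × X)} (hs : MeasurableSet s)
    (hμs : (m.prod m) s ≠ ∞) (c : E) : indicatorConstLp 2 hs hμs c ∈ Cl m E := by
  haveI : Fact ((1:ℝ≥0∞) ≤ 2) := ⟨one_le_two⟩
  set tk : ℕ → Set (X × X) := fun k => s ∩ R m k with htk_def
  have htkm : ∀ k, MeasurableSet (tk k) := fun k => hs.inter (R_meas k)
  have htkf : ∀ k, (m.prod m) (tk k) ≠ ∞ := fun k =>
    ((measure_mono Set.inter_subset_left).trans_lt hμs.lt_top).ne
  have hmem : ∀ k, indicatorConstLp 2 (htkm k) (htkf k) c ∈ Cl m E := fun k =>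
    windowed_mem_Cl hs k c (htkm k) (htkf k)
  have hanti : Antitone fun k => s \ R m k := fun a b hab =>
    Set.diff_subset_diff_right (R_mono hab)
  have hiInter : (⋂ k, s \ R m k) = ∅ := by
    rw [← Set.diff_iUnion, R_iUnion, Set.diff_univ]
  have hzero : Filter.Tendsto (fun k => (m.prod m) (tk k ∆ s)) Filter.atTop (nhds 0) := by
    have h1 : ∀ k, tk k ∆ s = s \ R m k := by
      intro k
      rw [symmDiff_of_le Set.inter_subset_left]
      ext q; simp only [Set.mem_diff, Set.mem_inter_iff]; tauto
    simp only [h1]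
    have := tendsto_measure_iInter_atTop (μ := m.prod m)
      (fun k => (hs.diff (R_meas k)).nullMeasurableSet) hanti
      ⟨0, ((measure_mono Set.diff_subset).trans_lt hμs.lt_top).ne⟩
    rw [hiInter] at this
    simpa [Function.comp_def] using this
  have htends := tendsto_indicatorConstLp_set (p := 2) (μ := m.prod m) (hs := hs) (hμs := hμs) (c := c)
    (ht := htkm) (hμt := htkf) (by norm_num) hzero
  have hclosed : IsClosed ((Cl m E : Set (Lp E 2 (m.prod m)))) := by
    rw [Cl]; exact Submodule.isClosed_topologicalClosure _
  exact hclosed.mem_of_tendsto htends (Filter.Eventually.of_forall hmem)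

variable (m E) in
lemma mem_Cl (f : Lp E 2 (m.prod m)) : f ∈ Cl m E := by
  haveI : Fact ((1:ℝ≥0∞) ≤ 2) := ⟨one_le_two⟩
  refine Lp.induction (E := E) (μ := m.prod m) (p := 2) ENNReal.ofNat_ne_top
    (fun f => f ∈ Cl m E) ?_ ?_ ?_ f
  · intro c s hs hμs
    rw [Lp.simpleFunc.coe_indicatorConst]
    exact indicator_mem_Cl hs hμs.ne c
  · intro f g hf hg hdisj h1 h2
    exact add_mem h1 h2
  · show IsClosed ((Cl m E : Set (Lp E 2 (m.prod m))))
    rw [Cl]; exact Submodule.isClosed_topologicalClosure _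

variable (m E) in
lemma dense_range_Phi :
    Dense ((LinearMap.range (Phi m E) : Submodule ℂ (Lp E 2 (m.prod m))) : Set (Lp E 2 (m.prod m))) := by
  intro x
  rw [← Submodule.topologicalClosure_coe]
  exact mem_Cl m E x

section W

variable (W : Lp E 2 m →L[ℂ] Lp E 2 m)

variable (m) in
/-- `Phi` composed with `id ⊗ W`. -/
noncomputable def Psi : (TensorProduct ℂ (Lp ℂ 2 m) (Lp E 2 m)) →ₗ[ℂ] Lp E 2 (m.prod m) :=
  (Phi m E).comp (TensorProduct.map LinearMap.id (W : Lp E 2 m →ₗ[ℂ] Lp E 2 m))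

lemma Psi_tmul (g : Lp ℂ 2 m) (H : Lp E 2 m) : Psi m W (g ⊗ₜ[ℂ] H) = tLp g (W H) := by
  rw [Psi, LinearMap.comp_apply, TensorProduct.map_tmul]
  simp only [LinearMap.id_coe, id_eq, ContinuousLinearMap.coe_coe, Phi_tmul]

lemma Psi_estimate (x : TensorProduct ℂ (Lp ℂ 2 m) (Lp E 2 m)) :
    ‖Psi m W x‖ ≤ ‖W‖ * ‖Phi m E x‖ := by
  obtain ⟨S, rfl⟩ := TensorProduct.exists_finset x
  rw [map_sum, map_sum]
  simp only [Psi_tmul, Phi_tmul]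
  exact key_estimate W S (fun p => p.1) (fun p => p.2)

lemma ker_le_ker : LinearMap.ker (Phi m E) ≤ LinearMap.ker (Psi m W) := by
  intro x hx
  rw [LinearMap.mem_ker] at hx ⊢
  have := Psi_estimate W x
  rw [hx, norm_zero, mul_zero] at this
  exact norm_le_zero_iff.mp this

variable (m) in
/-- The operator on the (non-closed) range of `Phi`. -/
noncomputable def f0 : (LinearMap.range (Phi m E)) →ₗ[ℂ] Lp E 2 (m.prod m) :=
  ((LinearMap.ker (Phi m E)).liftQ (Psi m W) (ker_le_ker W)).comp
    ((Phi m E).quotKerEquivRange.symm.toLinearMap)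

lemma f0_apply (x : TensorProduct ℂ (Lp ℂ 2 m) (Lp E 2 m)) (h : Phi m E x ∈ LinearMap.range (Phi m E)) :
    f0 m W ⟨Phi m E x, h⟩ = Psi m W x := by
  have hq : ((Phi m E).quotKerEquivRange).symm ⟨Phi m E x, h⟩ = Submodule.Quotient.mk x := by
    rw [LinearEquiv.symm_apply_eq]
    exact Subtype.ext ((Phi m E).quotKerEquivRange_apply_mk x)
  rw [f0, LinearMap.comp_apply, LinearEquiv.coe_toLinearMap, hq, Submodule.liftQ_apply]

lemma f0_bound (y : LinearMap.range (Phi m E)) : ‖f0 m W y‖ ≤ ‖W‖ * ‖y‖ := by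
  obtain ⟨x, hx⟩ := y.2
  have hy : y = ⟨Phi m E x, LinearMap.mem_range_self _ x⟩ := Subtype.ext hx.symm
  rw [hy, f0_apply]
  exact Psi_estimate W x

variable (m) in
noncomputable def fW : (LinearMap.range (Phi m E)) →L[ℂ] Lp E 2 (m.prod m) :=
  LinearMap.mkContinuous (f0 m W) ‖W‖ (f0_bound W)

variable (m E) in
noncomputable def eIncl : (LinearMap.range (Phi m E)) →L[ℂ] Lp E 2 (m.prod m) :=
  (LinearMap.range (Phi m E)).subtypeL

variable (m E) in
lemma dr : DenseRange ⇑(eIncl m E) := by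
  have h : ⇑(eIncl m E) = (Subtype.val : _ → Lp E 2 (m.prod m)) := rfl
  rw [DenseRange, h, Subtype.range_coe]
  exact dense_range_Phi m E

variable (m E) in
lemma ui : IsUniformInducing ⇑(eIncl m E) := isUniformEmbedding_subtype_val.isUniformInducing

variable (m) in
/-- The leg-numbering operator `W₂₃`. -/
noncomputable def W23 : Lp E 2 (m.prod m) →L[ℂ] Lp E 2 (m.prod m) :=
  (fW m W).extend (eIncl m E)

lemma W23_tLp (g : Lp ℂ 2 m) (H : Lp E 2 m) : W23 m W (tLp g H) = tLp g (W H) := by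
  have h : tLp g H = eIncl m E ⟨Phi m E (g ⊗ₜ[ℂ] H), LinearMap.mem_range_self _ (g ⊗ₜ[ℂ] H)⟩ := by
    exact (Phi_tmul g H).symm
  rw [h, W23, ContinuousLinearMap.extend_eq (h_dense := dr m E) (h_e := ui m E), fW, LinearMap.mkContinuous_apply, f0_apply,
    Psi_tmul]

lemma W23_norm_le : ‖W23 m W‖ ≤ ‖W‖ := by
  have h1 : ∀ y : LinearMap.range (Phi m E), ‖y‖ ≤ ((1:NNReal) : ℝ) * ‖eIncl m E y‖ := by
    intro y; simp [eIncl]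
  calc ‖W23 m W‖ ≤ ((1:NNReal) : ℝ) * ‖fW m W‖ :=
        ContinuousLinearMap.opNorm_extend_le (fW m W) (dr m E) h1
  _ ≤ ‖W‖ := by
        rw [NNReal.coe_one, one_mul]
        exact LinearMap.mkContinuous_norm_le _ (norm_nonneg W) _

lemma W23_prop (g : Lp ℂ 2 m) (H : Lp E 2 m) (K K' : Lp E 2 (m.prod m))
    (hK : (K : X × X → E) =ᵐ[m.prod m] fun q => (g : X → ℂ) q.1 • (H : X → E) q.2)
    (hK' : (K' : X × X → E) =ᵐ[m.prod m] fun q => (g : X → ℂ) q.1 • (W H : X → E) q.2) :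
    W23 m W K = K' := by
  have h1 : K = tLp g H := Lp.ext (hK.trans (tLp_ae g H).symm)
  have h2 : K' = tLp g (W H) := Lp.ext (hK'.trans (tLp_ae g (W H)).symm)
  rw [h1, h2, W23_tLp]

lemma W23_norm : ‖W23 m W‖ = ‖W‖ := by
  refine le_antisymm (W23_norm_le W) ?_
  by_cases hm : m = 0
  · have hW : W = 0 := by
      ext H
      have hH : H = 0 := by
        refine Lp.ext ?_
        have hb : ae m = ⊥ := by rw [hm]; exact ae_zero
        rw [hb]
        exact Filter.eventually_bot
      rw [hH]
      simp
    rw [hW, norm_zero]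
    exact norm_nonneg _
  · have hn : ∃ n, m (spanningSets m n) ≠ 0 := by
      by_contra hall
      push_neg at hall
      apply hm
      refine Measure.measure_univ_eq_zero.mp ?_
      rw [← iUnion_spanningSets m]
      exact measure_iUnion_null hall
    obtain ⟨n, hn0⟩ := hn
    set A := spanningSets m n with hA_def
    have hAm : MeasurableSet A := measurableSet_spanningSets m n
    have hAf : m A ≠ ∞ := (measure_spanningSets_lt_top m n).ne
    set g₀ : Lp ℂ 2 m := indicatorConstLp 2 hAm hAf (1 : ℂ) with hg0_def
    have hg₀ : ‖g₀‖ = (m A).toReal ^ (1/(2:ℝ)) := by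
      rw [hg0_def, norm_indicatorConstLp two_ne_zero ENNReal.ofNat_ne_top]
      simp
      rfl
    have hg₀pos : 0 < ‖g₀‖ := by
      rw [hg₀]
      refine Real.rpow_pos_of_pos ?_ _
      exact ENNReal.toReal_pos hn0 hAf
    set g : Lp ℂ 2 m := ((‖g₀‖⁻¹ : ℝ) : ℂ) • g₀ with hg_def
    have hg1 : ‖g‖ = 1 := by
      rw [hg_def, norm_smul]
      simp only [Complex.norm_real, norm_inv, norm_norm]
      exact inv_mul_cancel₀ hg₀pos.ne'
    refine W.opNorm_le_bound (norm_nonneg _) fun H => ?_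
    have h1 : ‖W H‖ = ‖tLp g (W H)‖ := by rw [norm_tLp, hg1, one_mul]
    rw [h1, ← W23_tLp]
    calc ‖W23 m W (tLp g H)‖ ≤ ‖W23 m W‖ * ‖tLp g H‖ := (W23 m W).le_opNorm _
    _ = ‖W23 m W‖ * ‖H‖ := by rw [norm_tLp, hg1, one_mul]

lemma W23_unique (W23' : Lp E 2 (m.prod m) →L[ℂ] Lp E 2 (m.prod m))
    (hp : ∀ (g : Lp ℂ 2 m) (H : Lp E 2 m), W23' (tLp g H) = tLp g (W H)) :
    W23' = W23 m W := by
  have hagree : Set.EqOn ⇑W23' ⇑(W23 m W)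
      ((LinearMap.range (Phi m E) : Submodule ℂ (Lp E 2 (m.prod m))) : Set (Lp E 2 (m.prod m))) := by
    rintro y ⟨x, rfl⟩
    induction x using TensorProduct.induction_on with
    | zero => simp
    | tmul g H => rw [Phi_tmul, hp, W23_tLp]
    | add x y hx hy => rw [map_add, map_add, map_add, hx, hy]
  have hfun : ⇑W23' = ⇑(W23 m W) :=
    Continuous.ext_on (dense_range_Phi m E) W23'.continuous (W23 m W).continuous hagree
  exact ContinuousLinearMap.coeFn_injective hfun

end W

end Leg23
open MeasureTheory

/-- Let `X` be a σ-finite measure space and `E` a complex Banach space.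
(i) For `g ∈ L²(X)` and `H ∈ L²(X, E)`, the function `(s, t) ↦ g(s) • H(t)` defines an
element `g⊠H` of `L²(X×X, E)` with `‖g⊠H‖ = ‖g‖ ‖H‖`.
(ii) For every bounded operator `W` on `L²(X, E)` there is a unique bounded operator
`W₂₃` on `L²(X×X, E)` with `W₂₃(g⊠H) = g⊠(W H)` for all `g, H`; moreover
`‖W₂₃‖ = ‖W‖`. -/
theorem leg_numbering_23
    {X : Type*} [MeasurableSpace X] (m : Measure X) [SigmaFinite m]
    {E : Type*} [NormedAddCommGroup E] [NormedSpace ℂ E] [CompleteSpace E] :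
    (∀ (g : Lp ℂ 2 m) (H : Lp E 2 m),
      ∃ K : Lp E 2 (m.prod m),
        (K =ᵐ[m.prod m] (fun q => g q.1 • H q.2)) ∧ ‖K‖ = ‖g‖ * ‖H‖) ∧
    (∀ W : Lp E 2 m →L[ℂ] Lp E 2 m,
      ∃ W23 : Lp E 2 (m.prod m) →L[ℂ] Lp E 2 (m.prod m),
        (∀ (g : Lp ℂ 2 m) (H : Lp E 2 m) (K K' : Lp E 2 (m.prod m)),
          K =ᵐ[m.prod m] (fun q => g q.1 • H q.2) →
          K' =ᵐ[m.prod m] (fun q => g q.1 • (W H) q.2) →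
          W23 K = K') ∧
        ‖W23‖ = ‖W‖ ∧
        ∀ W23' : Lp E 2 (m.prod m) →L[ℂ] Lp E 2 (m.prod m),
          (∀ (g : Lp ℂ 2 m) (H : Lp E 2 m) (K K' : Lp E 2 (m.prod m)),
            K =ᵐ[m.prod m] (fun q => g q.1 • H q.2) →
            K' =ᵐ[m.prod m] (fun q => g q.1 • (W H) q.2) →
            W23' K = K') →
          W23' = W23) := by
  constructor
  · intro g H
    exact ⟨Leg23.tLp g H, Leg23.tLp_ae g H, Leg23.norm_tLp g H⟩
  · intro W
    refine ⟨Leg23.W23 m W, Leg23.W23_prop W, Leg23.W23_norm W, ?_⟩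
    intro W23' hW23'
    refine Leg23.W23_unique W W23' fun g H => ?_
    exact hW23' g H (Leg23.tLp g H) (Leg23.tLp g (W H)) (Leg23.tLp_ae g H)
      (Leg23.tLp_ae g (W H))
end

section
/- Let G be a second-countable locally compact topological group with left Haar measure, let E be a reflexive complex Banach space (the canonical embedding E → E** is surjective), and let π : L¹(G) → B(E) be a bounded linear map. Let W be the unique bounded operator on L²(G, E) with ∫_G f(t)·μ((W(g•x))(t)) dt = μ(π(fg)(x)) for all f, g ∈ L²(G), x ∈ E, μ ∈ E*. Let W₂₃ be the unique bounded operator on L²(G×G, E) with W₂₃(g⊠H) = g⊠(W(H)) for all g ∈ L²(G), H ∈ L²(G, E); let χ be the isometric operator on L²(G×G, E) induced by the coordinate swap, (χH)(s, t) = H(t, s); and set W₁₃ = χ ∘ W₂₃ ∘ χ. Then π is multiplicative for convolution, i.e. π(a⋆b) = π(a) ∘ π(b) for all a, b ∈ L¹(G), if and only if for all f₁, f₂, g₁, g₂ ∈ L²(G), x ∈ E and μ ∈ E*: ∫_{G×G} f₁(s) f₂(t) · μ((W₁₃(W₂₃(g₁⊠(g₂•x))))(s, t)) d(s, t) = μ(π((f₁g₁)⋆(f₂g₂))(x)).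 -/
open MeasureTheory ComplexConjugate
open scoped ENNReal NNReal
set_option linter.unusedSectionVars false

namespace CorepAux

variable {G : Type*} [MeasurableSpace G] {ν : Measure G} [SigmaFinite ν]
variable {E : Type*} [NormedAddCommGroup E] [NormedSpace ℂ E]

lemma tensor_aesm (g : Lp ℂ 2 ν) (H : Lp E 2 ν) :
    AEStronglyMeasurable (fun q : G × G => g q.1 • H q.2) (ν.prod ν) :=
  ((Lp.aestronglyMeasurable g).comp_quasiMeasurePreserving
      Measure.quasiMeasurePreserving_fst).smul
    ((Lp.aestronglyMeasurable H).comp_quasiMeasurePreserving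
      Measure.quasiMeasurePreserving_snd)

lemma eLpNorm_two_eq {α : Type*} [MeasurableSpace α] (μ : Measure α)
    {F : Type*} [NormedAddCommGroup F] (f : α → F) :
    eLpNorm f 2 μ = (∫⁻ a, ((‖f a‖₊ : ℝ≥0∞) * ‖f a‖₊) ∂μ) ^ (1/2 : ℝ) := by
  rw [eLpNorm_eq_lintegral_rpow_enorm_toReal two_ne_zero ENNReal.ofNat_ne_top]
  have h2 : (2:ℝ≥0∞).toReal = ((2:ℕ):ℝ) := by norm_num
  rw [h2]
  congr 1
  refine lintegral_congr fun a => ?_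
  rw [ENNReal.rpow_natCast, pow_two, enorm_eq_nnnorm]

lemma tensor_eLpNorm (g : Lp ℂ 2 ν) (H : Lp E 2 ν) :
    eLpNorm (fun q : G × G => g q.1 • H q.2) 2 (ν.prod ν)
      = eLpNorm (⇑g) 2 ν * eLpNorm (⇑H) 2 ν := by
  rw [eLpNorm_two_eq, eLpNorm_two_eq, eLpNorm_two_eq,
    ← ENNReal.mul_rpow_of_nonneg _ _ (by norm_num : (0:ℝ) ≤ 1/2)]
  congr 1
  rw [← lintegral_prod_mul (f := fun x => (‖g x‖₊ : ℝ≥0∞) * ‖g x‖₊)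
      (g := fun y => (‖H y‖₊ : ℝ≥0∞) * ‖H y‖₊)
      (((Lp.aestronglyMeasurable g).enorm).mul (Lp.aestronglyMeasurable g).enorm)
      (((Lp.aestronglyMeasurable H).enorm).mul (Lp.aestronglyMeasurable H).enorm)]
  refine lintegral_congr fun q => ?_
  rw [nnnorm_smul, ENNReal.coe_mul]
  ring

lemma memℒp_tensor (g : Lp ℂ 2 ν) (H : Lp E 2 ν) :
    MemLp (fun q : G × G => g q.1 • H q.2) 2 (ν.prod ν) :=
  ⟨tensor_aesm g H, by
    rw [tensor_eLpNorm]
    exact ENNReal.mul_lt_top (Lp.eLpNorm_lt_top g) (Lp.eLpNorm_lt_top H)⟩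

/-- The elementary tensor `g ⊠ H` as an element of `L²(G×G, E)`. -/
noncomputable def tensorLp (g : Lp ℂ 2 ν) (H : Lp E 2 ν) : Lp E 2 (ν.prod ν) :=
  (memℒp_tensor g H).toLp _

lemma tensorLp_coeFn (g : Lp ℂ 2 ν) (H : Lp E 2 ν) :
    tensorLp g H =ᵐ[ν.prod ν] fun q => g q.1 • H q.2 :=
  (memℒp_tensor g H).coeFn_toLp

lemma tensorLp_norm (g : Lp ℂ 2 ν) (H : Lp E 2 ν) :
    ‖(tensorLp g H : Lp E 2 (ν.prod ν))‖ = ‖g‖ * ‖H‖ := by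
  rw [tensorLp, Lp.norm_toLp _ (memℒp_tensor g H), tensor_eLpNorm, ENNReal.toReal_mul,
    Lp.norm_def, Lp.norm_def]

/-- `tensorLp g` as a continuous linear map in the second variable. -/
noncomputable def tensorCLM (g : Lp ℂ 2 ν) : Lp E 2 ν →L[ℂ] Lp E 2 (ν.prod ν) :=
  LinearMap.mkContinuous
    { toFun := fun H => tensorLp g H
      map_add' := fun H H' => by
        refine Lp.ext ?_
        filter_upwards [tensorLp_coeFn g (H + H'), tensorLp_coeFn g H, tensorLp_coeFn g H',
          Lp.coeFn_add (tensorLp g H) (tensorLp g H'),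
          Measure.quasiMeasurePreserving_snd.ae_eq_comp
            (Lp.coeFn_add H H' : ⇑(H + H') =ᵐ[ν] ⇑H + ⇑H')] with q h1 h2 h3 h4 h5
        simp only [Function.comp] at h5
        simp only [h1, h4, Pi.add_apply, h2, h3, h5, smul_add]
      map_smul' := fun c H => by
        refine Lp.ext ?_
        filter_upwards [tensorLp_coeFn g (c • H), tensorLp_coeFn g H,
          Lp.coeFn_smul c (tensorLp g H),
          Measure.quasiMeasurePreserving_snd.ae_eq_comp
            (Lp.coeFn_smul c H : ⇑(c • H) =ᵐ[ν] c • ⇑H)] with q h1 h2 h3 h4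
        simp only [Function.comp] at h4
        simp only [RingHom.id_apply] 
        rw [h1, h3, h4, Pi.smul_apply, Pi.smul_apply, h2]
        exact smul_comm _ _ _ }
    ‖g‖ (fun H => le_of_eq (tensorLp_norm g H))

lemma tensorCLM_apply (g : Lp ℂ 2 ν) (H : Lp E 2 ν) :
    (tensorCLM g H : Lp E 2 (ν.prod ν)) = tensorLp g H := rfl

/-- `t ↦ g t • x` as an element of `L²(G, E)`. -/
noncomputable def vecLp (g : Lp ℂ 2 ν) (x : E) : Lp E 2 ν :=
  (ContinuousLinearMap.toSpanSingleton ℂ x).compLp g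

lemma vecLp_coeFn (g : Lp ℂ 2 ν) (x : E) :
    vecLp g x =ᵐ[ν] fun t => g t • x := by
  filter_upwards [(ContinuousLinearMap.toSpanSingleton ℂ x).coeFn_compLp g] with t ht
  rw [vecLp, ht, ContinuousLinearMap.toSpanSingleton_apply]

/-- Complex conjugation on `L²`. -/
noncomputable def conjLp (f : Lp ℂ 2 ν) : Lp ℂ 2 ν :=
  (Complex.conjCLE.toContinuousLinearMap).compLp f

lemma conjLp_coeFn (f : Lp ℂ 2 ν) : conjLp f =ᵐ[ν] fun t => conj (f t) := by
  filter_upwards [(Complex.conjCLE.toContinuousLinearMap).coeFn_compLp f] with t ht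
  rw [conjLp, ht]; rfl

lemma pair_eq (h : Lp ℂ 2 ν) (ψ : E →L[ℂ] ℂ) (M : Lp E 2 ν) :
    ((innerSL ℂ h).comp (ψ.compLpL 2 ν)) M = ∫ a, conj (h a) * ψ (M a) ∂ν := by
  rw [ContinuousLinearMap.comp_apply, innerSL_apply_apply, L2.inner_def]
  refine integral_congr_ae ?_
  filter_upwards [ψ.coeFn_compLpL M] with a ha
  rw [ha, RCLike.inner_apply, mul_comm]

/-- Square-root factorisation of an `L¹` function into a product of two `L²` functions. -/
lemma factor (a : Lp ℂ 1 ν) :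
    ∃ f g : Lp ℂ 2 ν, (fun t => f t * g t) =ᵐ[ν] ⇑a := by
  set F : G → ℂ := fun t => ((Real.sqrt ‖a t‖ : ℝ) : ℂ) with hFdef
  set Gf : G → ℂ := fun t => a t / F t with hGdef
  have hnormF : ∀ t, ‖F t‖ = Real.sqrt ‖a t‖ := fun t => by
    simp [hFdef, Real.sqrt_nonneg, abs_of_nonneg]
  have haesmF : AEStronglyMeasurable F ν :=
    (Complex.continuous_ofReal.comp
      (Real.continuous_sqrt.comp continuous_norm)).comp_aestronglyMeasurable
      (Lp.aestronglyMeasurable a)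
  have hF : MemLp F 2 ν := by
    refine ⟨haesmF, ?_⟩
    rw [eLpNorm_two_eq]
    have : ∀ t, ((‖F t‖₊ : ℝ≥0∞) * ‖F t‖₊) = (‖a t‖₊ : ℝ≥0∞) := by
      intro t
      rw [← ENNReal.coe_mul]
      congr 1
      ext
      simp only [NNReal.coe_mul, coe_nnnorm, hnormF]
      exact Real.mul_self_sqrt (norm_nonneg _)
    rw [lintegral_congr this]
    simp only [← enorm_eq_nnnorm]
    rw [← eLpNorm_one_eq_lintegral_enorm]
    exact ENNReal.rpow_lt_top_of_nonneg (by norm_num) (Lp.eLpNorm_lt_top a).ne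
  have hG : MemLp Gf 2 ν := by
    refine MemLp.of_le hF ?_ (Filter.Eventually.of_forall fun t => ?_)
    · exact ((Lp.aestronglyMeasurable a).aemeasurable.div
        haesmF.aemeasurable).aestronglyMeasurable
    · rw [hGdef]
      simp only [norm_div, hnormF]
      rcases eq_or_ne (a t) 0 with h | h
      · simp [h]
      · rw [div_le_iff₀ (Real.sqrt_pos.2 (norm_pos_iff.2 h)),
          Real.mul_self_sqrt (norm_nonneg _)]
  refine ⟨hF.toLp F, hG.toLp Gf, ?_⟩
  filter_upwards [hF.coeFn_toLp, hG.coeFn_toLp] with t h1 h2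
  rw [h1, h2, hGdef]
  rcases eq_or_ne (a t) 0 with h | h
  · simp [h]
  · have hFne : F t ≠ 0 := by
      simp only [hFdef, ne_eq, Complex.ofReal_eq_zero]
      exact ne_of_gt (Real.sqrt_pos.2 (norm_pos_iff.2 h))
    rw [mul_comm]
    exact div_mul_cancel₀ _ hFne

end CorepAux

open CorepAux in
/-- Let `G` be a second-countable locally compact group with left Haar measure `ν`, `E` a
reflexive complex Banach space, and `π : L¹(G) → B(E)` a bounded linear map, with
associated operator `W` on `L²(G, E)`, leg-numbered operators `W₂₃`, `W₁₃ = χ W₂₃ χ` on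
`L²(G×G, E)` (`χ` the coordinate swap).  Then `π` is multiplicative for convolution if
and only if `(Δ ⊗ id)W = W₁₃ W₂₃`, i.e. for all `f₁, f₂, g₁, g₂ ∈ L²(G)`, `x ∈ E`,
`φ ∈ E*`:
`∫ f₁(s) f₂(t) φ((W₁₃ W₂₃ (g₁ ⊠ (g₂ • x)))(s,t)) = φ(π((f₁g₁) ⋆ (f₂g₂)) x)`. -/
theorem pi_homomorphism_iff_corepresentation
    {G : Type*} [Group G] [TopologicalSpace G] [IsTopologicalGroup G]
    [LocallyCompactSpace G] [SecondCountableTopology G]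
    [MeasurableSpace G] [BorelSpace G]
    (ν : Measure G) [ν.IsHaarMeasure]
    {E : Type*} [NormedAddCommGroup E] [NormedSpace ℂ E] [CompleteSpace E]
    (hrefl : Function.Surjective (NormedSpace.inclusionInDoubleDual ℂ E))
    (π : Lp ℂ 1 ν →L[ℂ] (E →L[ℂ] E))
    (W : Lp E 2 ν →L[ℂ] Lp E 2 ν)
    (hW : ∀ (f g : Lp ℂ 2 ν) (x : E) (φ : StrongDual ℂ E)
        (gx : Lp E 2 ν) (fg : Lp ℂ 1 ν),
      gx =ᵐ[ν] (fun t => g t • x) → fg =ᵐ[ν] (fun t => f t * g t) →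
      ∫ t, f t * φ (W gx t) ∂ν = φ (π fg x))
    (W23 : Lp E 2 (ν.prod ν) →L[ℂ] Lp E 2 (ν.prod ν))
    (hW23 : ∀ (g : Lp ℂ 2 ν) (H : Lp E 2 ν) (K K' : Lp E 2 (ν.prod ν)),
      K =ᵐ[ν.prod ν] (fun q => g q.1 • H q.2) →
      K' =ᵐ[ν.prod ν] (fun q => g q.1 • (W H) q.2) →
      W23 K = K')
    (χ : Lp E 2 (ν.prod ν) →L[ℂ] Lp E 2 (ν.prod ν))
    (hχ : ∀ H : Lp E 2 (ν.prod ν), χ H =ᵐ[ν.prod ν] (fun q => H (q.2, q.1)))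
    (W13 : Lp E 2 (ν.prod ν) →L[ℂ] Lp E 2 (ν.prod ν))
    (hW13 : W13 = χ.comp (W23.comp χ)) :
    (∀ a b ab : Lp ℂ 1 ν,
        ab =ᵐ[ν] (fun t => ∫ s, a s * b (s⁻¹ * t) ∂ν) →
        π ab = (π a).comp (π b)) ↔
    (∀ (f₁ f₂ g₁ g₂ : Lp ℂ 2 ν) (x : E) (φ : StrongDual ℂ E)
        (g₂x : Lp E 2 ν) (K : Lp E 2 (ν.prod ν)) (f₁g₁ f₂g₂ c : Lp ℂ 1 ν),
      g₂x =ᵐ[ν] (fun t => g₂ t • x) →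
      K =ᵐ[ν.prod ν] (fun q => g₁ q.1 • g₂x q.2) →
      f₁g₁ =ᵐ[ν] (fun t => f₁ t * g₁ t) →
      f₂g₂ =ᵐ[ν] (fun t => f₂ t * g₂ t) →
      c =ᵐ[ν] (fun t => ∫ s, f₁g₁ s * f₂g₂ (s⁻¹ * t) ∂ν) →
      ∫ q, f₁ q.1 * f₂ q.2 * φ (W13 (W23 K) q) ∂(ν.prod ν) = φ (π c x)) := by
  have key : ∀ (f₁ f₂ g₁ g₂ : Lp ℂ 2 ν) (x : E) (φ : StrongDual ℂ E)
      (g₂x : Lp E 2 ν) (K : Lp E 2 (ν.prod ν)) (f₁g₁ f₂g₂ : Lp ℂ 1 ν),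
      g₂x =ᵐ[ν] (fun t => g₂ t • x) →
      K =ᵐ[ν.prod ν] (fun q => g₁ q.1 • g₂x q.2) →
      f₁g₁ =ᵐ[ν] (fun t => f₁ t * g₁ t) →
      f₂g₂ =ᵐ[ν] (fun t => f₂ t * g₂ t) →
      ∫ q, f₁ q.1 * f₂ q.2 * φ (W13 (W23 K) q) ∂(ν.prod ν)
        = φ (π f₁g₁ (π f₂g₂ x)) := by
    intro f₁ f₂ g₁ g₂ x φ g₂x K f₁g₁ f₂g₂ hg₂x hK hf₁g₁ hf₂g₂
    set H : Lp E 2 ν := W g₂x with hH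
    have hWK : W23 K = tensorLp g₁ H :=
      hW23 g₁ g₂x K (tensorLp g₁ H) hK (tensorLp_coeFn g₁ H)
    set Ψ : E →L[ℂ] ℂ := φ.comp (π f₁g₁) with hΨ
    set h2 : Lp ℂ 2 (ν.prod ν) := tensorLp (conjLp f₂) (conjLp f₁) with hh2
    set L1 : Lp E 2 (ν.prod ν) →L[ℂ] ℂ :=
      (innerSL ℂ h2).comp (φ.compLpL 2 (ν.prod ν)) with hL1def
    set L2 : Lp E 2 ν →L[ℂ] ℂ :=
      (innerSL ℂ (conjLp f₂)).comp (Ψ.compLpL 2 ν) with hL2def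
    have hL1 : ∀ M : Lp E 2 (ν.prod ν),
        L1 M = ∫ q, f₂ q.1 * f₁ q.2 * φ (M q) ∂(ν.prod ν) := by
      intro M
      rw [hL1def, pair_eq]
      refine integral_congr_ae ?_
      filter_upwards [tensorLp_coeFn (conjLp f₂) (conjLp f₁),
        Measure.quasiMeasurePreserving_fst.ae_eq_comp (conjLp_coeFn f₂),
        Measure.quasiMeasurePreserving_snd.ae_eq_comp (conjLp_coeFn f₁)] with q hq hc2 hc1
      simp only [Function.comp] at hc2 hc1
      rw [hq, smul_eq_mul, hc2, hc1, map_mul, Complex.conj_conj, Complex.conj_conj]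
    have hL2 : ∀ F : Lp E 2 ν, L2 F = ∫ u, f₂ u * φ (π f₁g₁ (F u)) ∂ν := by
      intro F
      rw [hL2def, pair_eq]
      refine integral_congr_ae ?_
      filter_upwards [conjLp_coeFn f₂] with u hu
      rw [hu, Complex.conj_conj]
      rfl
    have hind : ∀ F : Lp E 2 ν, L1 (W23 (χ (tensorCLM g₁ F))) = L2 F := by
      refine Lp.induction ENNReal.ofNat_ne_top
        (fun F : Lp E 2 ν => L1 (W23 (χ (tensorCLM g₁ F))) = L2 F) ?_ ?_ ?_
      · intro c s hs hμs
        set F : Lp E 2 ν := ↑(Lp.simpleFunc.indicatorConst 2 hs hμs.ne c) with hFdef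
        set g0 : Lp ℂ 2 ν := indicatorConstLp 2 hs hμs.ne (1:ℂ) with hg0
        set H0 : Lp E 2 ν := vecLp g₁ c with hH0
        have hFcoe : ⇑F =ᵐ[ν] s.indicator fun _ => c :=
          indicatorConstLp_coeFn (p := 2) (hs := hs) (hμs := hμs.ne) (c := c)
        have claim1 : (χ (tensorCLM g₁ F) : Lp E 2 (ν.prod ν))
            =ᵐ[ν.prod ν] fun q => g0 q.1 • H0 q.2 := by
          have hswapc := (Measure.measurePreserving_swap (μ := ν)
            (ν := ν)).quasiMeasurePreserving.ae_eq_comp (tensorLp_coeFn g₁ F)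
          filter_upwards [hχ (tensorCLM g₁ F), hswapc,
            Measure.quasiMeasurePreserving_fst.ae_eq_comp hFcoe,
            Measure.quasiMeasurePreserving_fst.ae_eq_comp
              (indicatorConstLp_coeFn (p := 2) (hs := hs) (hμs := hμs.ne) (c := (1:ℂ))),
            Measure.quasiMeasurePreserving_snd.ae_eq_comp (vecLp_coeFn g₁ c)]
            with q h1 h2 h3 h4 h5
          simp only [Function.comp, Prod.swap, tensorCLM_apply] at h1 h2 h3 h4 h5 ⊢
          rw [h1, h2, h4, h5, h3]
          by_cases hmem : q.1 ∈ s
          · simp only [Set.indicator_of_mem hmem, one_smul]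
          · simp only [Set.indicator_of_notMem hmem, smul_zero, zero_smul]
        have hw : W23 (χ (tensorCLM g₁ F)) = tensorLp g0 (W H0) :=
          hW23 g0 H0 _ _ claim1 (tensorLp_coeFn g0 (W H0))
        rw [hw, hL1 _, hL2 _]
        have lhs_eq : ∫ q, f₂ q.1 * f₁ q.2 * φ ((tensorLp g0 (W H0)) q) ∂(ν.prod ν)
            = (∫ u, f₂ u * g0 u ∂ν) * ∫ t, f₁ t * φ ((W H0) t) ∂ν := by
          rw [← integral_prod_mul (μ := ν) (ν := ν) (fun u => f₂ u * g0 u)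
            (fun t => f₁ t * φ ((W H0) t))]
          refine integral_congr_ae ?_
          filter_upwards [tensorLp_coeFn g0 (W H0)] with q hq
          rw [hq, φ.map_smul, smul_eq_mul]
          ring
        have hWH0 : ∫ t, f₁ t * φ ((W H0) t) ∂ν = φ (π f₁g₁ c) :=
          hW f₁ g₁ c φ H0 f₁g₁ (vecLp_coeFn g₁ c) hf₁g₁
        have rhs_eq : ∫ u, f₂ u * φ (π f₁g₁ (F u)) ∂ν
            = (∫ u, f₂ u * g0 u ∂ν) * φ (π f₁g₁ c) := by
          rw [← integral_mul_const]
          refine integral_congr_ae ?_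
          filter_upwards [hFcoe,
            indicatorConstLp_coeFn (p := 2) (hs := hs) (hμs := hμs.ne) (c := (1:ℂ))]
            with u h3 h4
          rw [h3, h4]
          by_cases hmem : u ∈ s
          · simp only [Set.indicator_of_mem hmem, mul_one]
          · simp only [Set.indicator_of_notMem hmem, map_zero, mul_zero, zero_mul]
        rw [lhs_eq, hWH0, rhs_eq]
      · intro u v huℒ hvℒ hdisj hu hv
        rw [map_add (tensorCLM g₁), map_add χ, map_add W23, map_add L1, map_add L2, hu, hv]
      · exact isClosed_eq
          ((L1.comp ((W23.comp χ).comp (tensorCLM g₁))).continuous) L2.continuous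
    have step1 : ∫ q, f₁ q.1 * f₂ q.2 * φ (W13 (W23 K) q) ∂(ν.prod ν)
        = ∫ q, f₂ q.1 * f₁ q.2 * φ ((W23 (χ (tensorCLM g₁ H))) q) ∂(ν.prod ν) := by
      rw [hWK, hW13]
      simp only [ContinuousLinearMap.comp_apply]
      rw [← tensorCLM_apply]
      set M' := W23 (χ (tensorCLM g₁ H)) with hM'
      have h1 : ∫ q, f₁ q.1 * f₂ q.2 * φ ((χ M') q) ∂(ν.prod ν)
          = ∫ q, f₁ q.1 * f₂ q.2 * φ (M' (q.2, q.1)) ∂(ν.prod ν) := by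
        refine integral_congr_ae ?_
        filter_upwards [hχ M'] with q hq
        rw [hq]
      rw [h1, ← integral_prod_swap (fun q => f₂ q.1 * f₁ q.2 * φ (M' q))]
      refine integral_congr_ae (Filter.Eventually.of_forall fun q => ?_)
      simp only [Prod.swap]
      ring
    rw [step1, ← hL1, hind, hL2]
    exact hW f₂ g₂ x Ψ g₂x f₂g₂ hg₂x hf₂g₂
  constructor
  · intro hhom f₁ f₂ g₁ g₂ x φ g₂x K f₁g₁ f₂g₂ c hg₂x hK h1 h2 hc
    rw [key f₁ f₂ g₁ g₂ x φ g₂x K f₁g₁ f₂g₂ hg₂x hK h1 h2, hhom f₁g₁ f₂g₂ c hc]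
    rfl
  · intro hrep a b ab hab
    obtain ⟨f₁, g₁, ha⟩ := factor a
    obtain ⟨f₂, g₂, hb⟩ := factor b
    refine ContinuousLinearMap.ext fun x => ?_
    refine (NormedSpace.eq_iff_forall_dual_eq (𝕜 := ℂ)).2 fun φ => ?_
    have h1 := hrep f₁ f₂ g₁ g₂ x φ (vecLp g₂ x) (tensorLp g₁ (vecLp g₂ x)) a b ab
      (vecLp_coeFn g₂ x) (tensorLp_coeFn g₁ (vecLp g₂ x)) ha.symm hb.symm hab
    have h2 := key f₁ f₂ g₁ g₂ x φ (vecLp g₂ x) (tensorLp g₁ (vecLp g₂ x)) a b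
      (vecLp_coeFn g₂ x) (tensorLp_coeFn g₁ (vecLp g₂ x)) ha.symm hb.symm
    rw [h2] at h1
    rw [ContinuousLinearMap.comp_apply]
    exact h1.symm
end
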